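/- Let l ∈ ℝ, let m ≥ 3 be an integer, let λ > 1/2, and let α = (β,k) ∈ ℕ³ and β̃ = (β̃₁,β̃₂) ∈ ℕ² be multi-indices with |α| + |β̃| ≤ m. Then there exists a constant C = C(m,λ) such that for all sufficiently regular functions g, h of (t,x,y): ‖(D^α g · ∂_τ^{β̃}∂_y^{-1}h)(t,·)‖_{L²_{l+k}(Ω)} ≤ C‖g(t)‖_{𝓗^m_{l+λ}}‖h(t)‖_{𝓗^m_{1−λ}}; in particular, for λ = 1, ‖(D^α g · ∂_τ^{β̃}∂_y^{-1}h)(t,·)‖_{L²_{l+k}(Ω)} ≤ C‖g(t)‖_{𝓗^m_{l+1}}‖h(t)‖_{𝓗^m_0}. -/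

import Mathlib

open MeasureTheory Real Set Filter

set_option linter.unusedVariables false

noncomputable section

abbrev F3 := ℝ → ℝ → ℝ → ℝ
abbrev F2 := ℝ → ℝ → ℝ

/-- The domain Ω = 𝕋ₓ × ℝ₊, modeled by its fundamental domain [0,1] × [0,∞) ⊆ ℝ². -/
def OmegaSet : Set (ℝ × ℝ) := (Set.Icc (0:ℝ) 1) ×ˢ (Set.Ici (0:ℝ))

/-- ∂_t for functions of (t,x,y). -/
def pdt (f : F3) : F3 := fun t x y => deriv (fun s => f s x y) t
/-- ∂_x for functions of (t,x,y). -/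
def pdx (f : F3) : F3 := fun t x y => deriv (fun s => f t s y) x
/-- ∂_y for functions of (t,x,y). -/
def pdy (f : F3) : F3 := fun t x y => deriv (fun s => f t x s) y

/-- D^α = ∂_t^{β₁} ∂_x^{β₂} ∂_y^k for α = (β₁,β₂,k). -/
def Dop (b1 b2 k : ℕ) (f : F3) : F3 := (pdt^[b1]) ((pdx^[b2]) ((pdy^[k]) f))

/-- Tangential derivative ∂_τ^β = ∂_t^{β₁} ∂_x^{β₂}. -/
def dtau (b1 b2 : ℕ) (f : F3) : F3 := Dop b1 b2 0 f

/-- ∂_x for functions of (x,y). -/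
def pdX (f : F2) : F2 := fun x y => deriv (fun s => f s y) x
/-- ∂_y for functions of (x,y). -/
def pdY (f : F2) : F2 := fun x y => deriv (fun s => f x s) y

/-- ∂_t for functions of (t,x). -/
def pdtT (f : F2) : F2 := fun t x => deriv (fun s => f s x) t
/-- ∂_x for functions of (t,x). -/
def pdxT (f : F2) : F2 := fun t x => deriv (fun s => f t s) x

/-- Tangential derivative ∂_τ^β for functions of (t,x). -/
def dtauT (b : ℕ × ℕ) (f : F2) : F2 := (pdtT^[b.1]) ((pdxT^[b.2]) f)

/-- Weighted norm ‖f‖_{L²_l(Ω)} = ‖⟨y⟩^l f‖_{L²(Ω)}. -/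
def L2l (l : ℝ) (f : F2) : ℝ :=
  Real.sqrt (∫ p in OmegaSet, (1 + p.2) ^ (2 * l) * (f p.1 p.2) ^ 2)

/-- Weighted L²_l norm of a triple (vector-valued function). -/
def L2l3 (l : ℝ) (f1 f2 f3 : F2) : ℝ :=
  Real.sqrt ((L2l l f1)^2 + (L2l l f2)^2 + (L2l l f3)^2)

def idx2 (m : ℕ) : Finset (ℕ × ℕ) :=
  (Finset.range (m+1) ×ˢ Finset.range (m+1)).filter (fun q => q.1 + q.2 ≤ m)

/-- Squared weighted Sobolev norm ‖f‖²_{H^m_l(Ω)}. -/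
def HmlSq (m : ℕ) (l : ℝ) (f : F2) : ℝ :=
  ∑ q ∈ idx2 m, (L2l (l + (q.2 : ℝ)) ((pdX^[q.1]) ((pdY^[q.2]) f)))^2

/-- Membership f ∈ H^m_l(Ω) (integrability of all weighted derivatives). -/
def MemHml (m : ℕ) (l : ℝ) (f : F2) : Prop :=
  ∀ q ∈ idx2 m, IntegrableOn (fun p : ℝ × ℝ =>
    (1 + p.2) ^ (2 * (l + (q.2 : ℝ))) * (((pdX^[q.1]) ((pdY^[q.2]) f)) p.1 p.2)^2)
    OmegaSet volume

/-- indices α = (β₁,β₂,k) with |α| ≤ m. -/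
def idx3 (m : ℕ) : Finset (ℕ × ℕ × ℕ) :=
  (Finset.range (m+1) ×ˢ Finset.range (m+1) ×ˢ Finset.range (m+1)).filter
    (fun a => a.1 + a.2.1 + a.2.2 ≤ m)

/-- indices α = (β,k) with |α| ≤ m and |β| ≤ m-1. -/
def idxP (m : ℕ) : Finset (ℕ × ℕ × ℕ) :=
  (Finset.range (m+1) ×ˢ Finset.range (m+1) ×ˢ Finset.range (m+1)).filter
    (fun a => a.1 + a.2.1 + a.2.2 ≤ m ∧ a.1 + a.2.1 ≤ m - 1)

/-- tangential indices β with |β| = m. -/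
def idxE (m : ℕ) : Finset (ℕ × ℕ) :=
  (Finset.range (m+1) ×ˢ Finset.range (m+1)).filter (fun b => b.1 + b.2 = m)

/-- Squared norm ‖f(t)‖²_{𝓗^m_l}. -/
def HcalSq (m : ℕ) (l : ℝ) (f : F3) (t : ℝ) : ℝ :=
  ∑ a ∈ idx3 m, (L2l (l + (a.2.2 : ℝ)) (Dop a.1 a.2.1 a.2.2 f t))^2

/-- Membership f(t) ∈ 𝓗^m_l. -/
def MemHcal (m : ℕ) (l : ℝ) (f : F3) (t : ℝ) : Prop :=
  ∀ a ∈ idx3 m, IntegrableOn (fun p : ℝ × ℝ =>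
    (1 + p.2) ^ (2 * (l + (a.2.2 : ℝ))) * (Dop a.1 a.2.1 a.2.2 f t p.1 p.2)^2)
    OmegaSet volume

/-- ‖(u,θ,h)(t)‖_{𝓗^m_l}. -/
def HcalN3 (m : ℕ) (l : ℝ) (u θ h : F3) (t : ℝ) : ℝ :=
  Real.sqrt (HcalSq m l u t + HcalSq m l θ t + HcalSq m l h t)

def LinfOmega (f : F2) : ℝ := sSup ((fun p : ℝ × ℝ => |f p.1 p.2|) '' OmegaSet)

def LinfT (f : ℝ → ℝ) : ℝ := sSup ((fun x => |f x|) '' Set.Icc (0:ℝ) 1)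

def L2T (f : ℝ → ℝ) : ℝ := Real.sqrt (∫ x in Set.Icc (0:ℝ) 1, (f x)^2)

/-- Sobolev norm ‖f‖_{H^s(𝕋ₓ)}. -/
def HsTorus (s : ℕ) (f : ℝ → ℝ) : ℝ :=
  Real.sqrt (∑ j ∈ Finset.range (s+1), ∫ x in Set.Icc (0:ℝ) 1, (iteratedDeriv j f x)^2)

/-- ‖∂_τ^β (U,Θ,H,P)(t)‖_{L²(𝕋ₓ)}. -/
def outerN4 (b : ℕ × ℕ) (U Θ H P : F2) (t : ℝ) : ℝ :=
  Real.sqrt ((L2T (dtauT b U t))^2 + (L2T (dtauT b Θ t))^2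
    + (L2T (dtauT b H t))^2 + (L2T (dtauT b P t))^2)

/-- ‖∂_τ^β (U,Θ,H)(t)‖_{L²(𝕋ₓ)}. -/
def outerN3 (b : ℕ × ℕ) (U Θ H : F2) (t : ℝ) : ℝ :=
  Real.sqrt ((L2T (dtauT b U t))^2 + (L2T (dtauT b Θ t))^2 + (L2T (dtauT b H t))^2)

/-- ‖∂_τ^β (Θ,P)(t)‖_{L²(𝕋ₓ)}. -/
def outerN2 (b : ℕ × ℕ) (Θ P : F2) (t : ℝ) : ℝ :=
  Real.sqrt ((L2T (dtauT b Θ t))^2 + (L2T (dtauT b P t))^2)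

def smooth3 (f : F3) : Prop := ContDiff ℝ (⊤ : ℕ∞) (fun p : ℝ × ℝ × ℝ => f p.1 p.2.1 p.2.2)
def smooth2 (f : F2) : Prop := ContDiff ℝ (⊤ : ℕ∞) (fun p : ℝ × ℝ => f p.1 p.2)

/-- Smoothness and x-periodicity of the outer flow (U,Θ,H,P). -/
def OuterFlow (U Θ H P : F2) : Prop :=
  smooth2 U ∧ smooth2 Θ ∧ smooth2 H ∧ smooth2 P ∧
  ∀ t x, U t (x+1) = U t x ∧ Θ t (x+1) = Θ t x ∧ H t (x+1) = H t x ∧ P t (x+1) = P t x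

/-- The bound M₀ on Σ_{i≤2m+2} sup_{0≤t≤T} ‖∂_t^i(U,Θ,H,P)(t)‖_{H^{2m+2-i}(𝕋ₓ)}. -/
def OuterBound (m : ℕ) (T M0 : ℝ) (U Θ H P : F2) : Prop :=
  ∀ i ≤ 2*m+2, ∀ t ∈ Set.Icc (0:ℝ) T,
    HsTorus (2*m+2-i) ((pdtT^[i] U) t) + HsTorus (2*m+2-i) ((pdtT^[i] Θ) t)
      + HsTorus (2*m+2-i) ((pdtT^[i] H) t) + HsTorus (2*m+2-i) ((pdtT^[i] P) t) ≤ M0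

/-- φ is a smooth auxiliary function with φ(y) = y for y ≥ 2R₀, φ(y) = 0 for 0 ≤ y ≤ R₀. -/
def PhiCutoff (R0 : ℝ) (φ : ℝ → ℝ) : Prop :=
  0 < R0 ∧ ContDiff ℝ (⊤ : ℕ∞) φ ∧ (∀ y, 2*R0 ≤ y → φ y = y) ∧
    ∀ y, 0 ≤ y → y ≤ R0 → φ y = 0

/-- The temperature-dependent viscous flux (θ + Θφ' + 1)∂_y u. -/
def viscF (Θ : F2) (φ : ℝ → ℝ) (θ u : F3) : F3 :=
  fun t x y => (θ t x y + Θ t x * deriv φ y + 1) * pdy u t x y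

/-- Convection operator [(u+Uφ')∂_x + (v−U_xφ)∂_y] f. -/
def convU (U : F2) (φ : ℝ → ℝ) (u v f : F3) : F3 :=
  fun t x y => (u t x y + U t x * deriv φ y) * pdx f t x y
    + (v t x y - pdxT U t x * φ y) * pdy f t x y

/-- Magnetic convection operator [(h+Hφ')∂_x + (g−H_xφ)∂_y] f. -/
def convB (H : F2) (φ : ℝ → ℝ) (h g f : F3) : F3 :=
  fun t x y => (h t x y + H t x * deriv φ y) * pdx f t x y
    + (g t x y - pdxT H t x * φ y) * pdy f t x y

/-- Source term r₁. -/
def srcR1 (μ κ ν cv : ℝ) (U Θ H P : F2) (φ : ℝ → ℝ) : F3 := fun t x y =>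
  pdtT U t x * ((deriv φ y)^2 - deriv φ y - φ y * deriv (deriv φ) y)
  + pdxT P t x * ((deriv φ y)^2 - φ y * deriv (deriv φ) y - 1)
  + U t x * Θ t x * (deriv φ y * deriv (deriv (deriv φ)) y + (deriv (deriv φ) y)^2)
  + U t x * (deriv φ y * deriv (deriv (deriv φ)) y)

/-- Source term r₂. -/
def srcR2 (μ κ ν cv : ℝ) (U Θ H P : F2) (φ : ℝ → ℝ) : F3 := fun t x y =>
  cv * pdtT Θ t x * ((deriv φ y)^2 - deriv φ y)
  + cv * pdxT U t x * Θ t x * (φ y * deriv (deriv φ) y)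
  + κ * Θ t x * deriv (deriv (deriv φ)) y
  - μ * Θ t x * deriv φ y * (U t x * deriv (deriv φ) y)^2
  + μ * (U t x * deriv (deriv φ) y)^2
  + κ * (Θ t x * deriv (deriv φ) y)^2
  + ν * (H t x * deriv (deriv φ) y)^2

/-- Source term r₃. -/
def srcR3 (μ κ ν cv : ℝ) (U Θ H P : F2) (φ : ℝ → ℝ) : F3 := fun t x y =>
  pdtT H t x * ((deriv φ y)^2 - deriv φ y + φ y * deriv (deriv φ) y)
  + ν * H t x * deriv (deriv (deriv φ)) y

/-- Source term r₄ = H_t φ(1−φ') + νHφ''. -/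
def srcR4 (ν : ℝ) (H : F2) (φ : ℝ → ℝ) : F3 := fun t x y =>
  pdtT H t x * φ y * (1 - deriv φ y) + ν * H t x * deriv (deriv φ) y

/-- The transformed MHD boundary layer system (2.8)-(2.9) on [0,T] × Ω. -/
structure MHDSol (μ κ ν cv T R0 : ℝ) (φ : ℝ → ℝ) (U Θ H P : F2)
    (u v θ h g : F3) : Prop where
  periodic : ∀ t x y, u t (x+1) y = u t x y ∧ v t (x+1) y = v t x y ∧
    θ t (x+1) y = θ t x y ∧ h t (x+1) y = h t x y ∧ g t (x+1) y = g t x y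
  eq_u : ∀ t ∈ Set.Icc (0:ℝ) T, ∀ x : ℝ, ∀ y ∈ Set.Ici (0:ℝ),
    pdt u t x y + convU U φ u v u t x y - convB H φ h g h t x y
      - μ * pdy (viscF Θ φ θ u) t x y
      + pdxT U t x * deriv φ y * u t x y + U t x * deriv (deriv φ) y * v t x y
      - pdxT H t x * deriv φ y * h t x y - H t x * deriv (deriv φ) y * g t x y
      - U t x * deriv (deriv (deriv φ)) y * θ t x y
      - U t x * deriv (deriv φ) y * pdy θ t x y
    = srcR1 μ κ ν cv U Θ H P φ t x y
  eq_θ : ∀ t ∈ Set.Icc (0:ℝ) T, ∀ x : ℝ, ∀ y ∈ Set.Ici (0:ℝ),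
    cv * (pdt θ t x y + convU U φ u v θ t x y) - κ * pdy (pdy θ) t x y
      + cv * pdxT Θ t x * deriv φ y * u t x y + cv * Θ t x * deriv (deriv φ) y * v t x y
      - μ * θ t x y * (pdy u t x y)^2
      - μ * (U t x * deriv (deriv φ) y)^2 * θ t x y
      - 2 * μ * U t x * deriv (deriv φ) y * θ t x y * pdy u t x y
      - μ * Θ t x * deriv φ y * (pdy u t x y)^2
      - 2 * μ * Θ t x * U t x * deriv φ y * deriv (deriv φ) y * pdy u t x y
      - 2 * μ * U t x * deriv (deriv φ) y * pdy u t x y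
      - μ * (pdy u t x y)^2 - ν * (pdy h t x y)^2
      - 2 * ν * H t x * deriv φ y * pdy h t x y
    = srcR2 μ κ ν cv U Θ H P φ t x y
  eq_h : ∀ t ∈ Set.Icc (0:ℝ) T, ∀ x : ℝ, ∀ y ∈ Set.Ici (0:ℝ),
    pdt h t x y + convU U φ u v h t x y - convB H φ h g u t x y
      - ν * pdy (pdy h) t x y
      + pdxT H t x * deriv φ y * u t x y + H t x * deriv (deriv φ) y * v t x y
      - pdxT U t x * deriv φ y * h t x y - U t x * deriv (deriv φ) y * g t x y
    = srcR3 μ κ ν cv U Θ H P φ t x y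
  div_u : ∀ t ∈ Set.Icc (0:ℝ) T, ∀ x : ℝ, ∀ y ∈ Set.Ici (0:ℝ),
    pdx u t x y + pdy v t x y = 0
  div_h : ∀ t ∈ Set.Icc (0:ℝ) T, ∀ x : ℝ, ∀ y ∈ Set.Ici (0:ℝ),
    pdx h t x y + pdy g t x y = 0
  bc : ∀ t ∈ Set.Icc (0:ℝ) T, ∀ x : ℝ,
    u t x 0 = 0 ∧ v t x 0 = 0 ∧ θ t x 0 = 0 ∧ pdy h t x 0 = 0 ∧ g t x 0 = 0
  decay : ∀ t ∈ Set.Icc (0:ℝ) T, ∀ x : ℝ,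
    Tendsto (fun y => u t x y) atTop (nhds 0) ∧
    Tendsto (fun y => θ t x y) atTop (nhds 0) ∧
    Tendsto (fun y => h t x y) atTop (nhds 0)

/-- f ∈ L^∞(0,T; 𝓗^m_l). -/
def InLinfH (m : ℕ) (l T : ℝ) (f : F3) : Prop :=
  ∃ C, ∀ t ∈ Set.Icc (0:ℝ) T, HcalSq m l f t ≤ C

/-- f ∈ L²(0,T; 𝓗^m_l). -/
def InL2H (m : ℕ) (l T : ℝ) (f : F3) : Prop :=
  IntegrableOn (fun t => HcalSq m l f t) (Set.Icc (0:ℝ) T) volume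

/-- f ∈ ⋂_{i=0}^{m} W^{i,∞}(0,T; H^{m-i}_l(Ω)). -/
def InCapW (m : ℕ) (l T : ℝ) (f : F3) : Prop :=
  ∀ i ≤ m, ∃ C, ∀ t ∈ Set.Icc (0:ℝ) T, HmlSq (m - i) l ((pdt^[i] f) t) ≤ C

/-- Regularity of a classical solution: smooth, (u,θ,h) ∈ L^∞(0,T;𝓗^m_l) and
(∂_y u, ∂_y θ, ∂_y h) ∈ L²(0,T;𝓗^m_l). -/
def ClassicalSol (m : ℕ) (l T : ℝ) (u θ h : F3) : Prop :=
  smooth3 u ∧ smooth3 θ ∧ smooth3 h ∧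
  InLinfH m l T u ∧ InLinfH m l T θ ∧ InLinfH m l T h ∧
  InL2H m l T (pdy u) ∧ InL2H m l T (pdy θ) ∧ InL2H m l T (pdy h)

/-- h + Hφ' ≥ δ₀ on [0,T] × Ω. -/
def LowerBoundH (T δ0 : ℝ) (φ : ℝ → ℝ) (H : F2) (h : F3) : Prop :=
  ∀ t ∈ Set.Icc (0:ℝ) T, ∀ x : ℝ, ∀ y ∈ Set.Ici (0:ℝ),
    δ0 ≤ h t x y + H t x * deriv φ y

/-- ⟨y⟩^{l+1}|∂_y^i (u,θ,h)| ≤ δ₀⁻¹ for i = 1,2 on [0,T] × Ω. -/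
def DerivBound (T δ0 l : ℝ) (u θ h : F3) : Prop :=
  ∀ t ∈ Set.Icc (0:ℝ) T, ∀ x : ℝ, ∀ y ∈ Set.Ici (0:ℝ),
    (1+y)^(l+1) * |pdy u t x y| ≤ δ0⁻¹ ∧ (1+y)^(l+1) * |pdy θ t x y| ≤ δ0⁻¹ ∧
    (1+y)^(l+1) * |pdy h t x y| ≤ δ0⁻¹ ∧
    (1+y)^(l+1) * |pdy (pdy u) t x y| ≤ δ0⁻¹ ∧
    (1+y)^(l+1) * |pdy (pdy θ) t x y| ≤ δ0⁻¹ ∧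
    (1+y)^(l+1) * |pdy (pdy h) t x y| ≤ δ0⁻¹

/-- ⟨y⟩^{l+1}|∂_y^i (u₀,θ₀,h₀)| ≤ (2δ₀)⁻¹ for i = 1,2 on Ω. -/
def DerivBound0 (δ0 l : ℝ) (u0 θ0 h0 : F2) : Prop :=
  ∀ x : ℝ, ∀ y ∈ Set.Ici (0:ℝ),
    (1+y)^(l+1) * |pdY u0 x y| ≤ (2*δ0)⁻¹ ∧ (1+y)^(l+1) * |pdY θ0 x y| ≤ (2*δ0)⁻¹ ∧
    (1+y)^(l+1) * |pdY h0 x y| ≤ (2*δ0)⁻¹ ∧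
    (1+y)^(l+1) * |pdY (pdY u0) x y| ≤ (2*δ0)⁻¹ ∧
    (1+y)^(l+1) * |pdY (pdY θ0) x y| ≤ (2*δ0)⁻¹ ∧
    (1+y)^(l+1) * |pdY (pdY h0) x y| ≤ (2*δ0)⁻¹

/-- Zeroth-order compatibility conditions of the initial data with the
boundary conditions (standing in for the m-th order compatibility conditions). -/
def CompatUpTo (m : ℕ) (u0 θ0 h0 : F2) : Prop :=
  ∀ x : ℝ, u0 x 0 = 0 ∧ θ0 x 0 = 0 ∧ pdY h0 x 0 = 0

/-- Stream function ψ = ∂_y^{-1} h. -/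
def psiF (h : F3) : F3 := fun t x y => ∫ z in (0:ℝ)..y, h t x z

/-- η = (∂_y f + Aφ'')/(h + Hφ'). -/
def etaF (φ : ℝ → ℝ) (A H : F2) (f h : F3) : F3 :=
  fun t x y => (pdy f t x y + A t x * deriv (deriv φ) y) / (h t x y + H t x * deriv φ y)

/-- Good unknown f_β = ∂_τ^β f − η ∂_τ^β ψ. -/
def goodU (φ : ℝ → ℝ) (A H : F2) (f h : F3) (b : ℕ × ℕ) : F3 :=
  fun t x y => dtau b.1 b.2 f t x y - etaF φ A H f h t x y * dtau b.1 b.2 (psiF h) t x y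

/-- Σ_{|α|≤m, |β|≤m-1} ‖D^α(r₁,r₂,r₃)(t)‖²_{L²_{l+k}}. -/
def srcSq (m : ℕ) (l : ℝ) (μ κ ν cv : ℝ) (U Θ H P : F2) (φ : ℝ → ℝ) (t : ℝ) : ℝ :=
  ∑ a ∈ idxP m,
    ((L2l (l + (a.2.2:ℝ)) (Dop a.1 a.2.1 a.2.2 (srcR1 μ κ ν cv U Θ H P φ) t))^2
     + (L2l (l + (a.2.2:ℝ)) (Dop a.1 a.2.1 a.2.2 (srcR2 μ κ ν cv U Θ H P φ) t))^2
     + (L2l (l + (a.2.2:ℝ)) (Dop a.1 a.2.1 a.2.2 (srcR3 μ κ ν cv U Θ H P φ) t))^2)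

/-- F(0) of Proposition 3.2. -/
def Fzero (m : ℕ) (l δ0 : ℝ) (φ : ℝ → ℝ) (U Θ H : F2) (u θ h : F3) : ℝ :=
  (∑ a ∈ idxP m,
    ((L2l (l + (a.2.2:ℝ)) (Dop a.1 a.2.1 a.2.2 u 0))^2
     + (L2l (l + (a.2.2:ℝ)) (Dop a.1 a.2.1 a.2.2 θ 0))^2
     + (L2l (l + (a.2.2:ℝ)) (Dop a.1 a.2.1 a.2.2 h 0))^2))
  + 36 * δ0⁻¹^4 * ∑ b ∈ idxE m,
      ((L2l l ((goodU φ U H u h b) 0))^2 + (L2l l ((goodU φ Θ H θ h b) 0))^2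
        + (L2l l ((goodU φ H H h h b) 0))^2)

/-- G(t) of Proposition 3.2, with constant C. -/
def Gfun (C : ℝ) (m : ℕ) (l δ0 μ κ ν cv : ℝ) (φ : ℝ → ℝ) (U Θ H P : F2) (t : ℝ) : ℝ :=
  C * δ0⁻¹^8 * ((∑ b ∈ idx2 (m+2), (outerN4 b U Θ H P t)^2) + 1)^5
  + C * srcSq m l μ κ ν cv U Θ H P φ t
  + C * δ0⁻¹^4 * ∑ b ∈ idxE m,
      ((L2l l (dtau b.1 b.2 (srcR1 μ κ ν cv U Θ H P φ) t))^2
       + (L2l l (dtau b.1 b.2 (srcR2 μ κ ν cv U Θ H P φ) t))^2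
       + (L2l l (dtau b.1 b.2 (srcR3 μ κ ν cv U Θ H P φ) t))^2
       + 4 * δ0⁻¹^4 * (L2l (-1) (dtau b.1 b.2 (srcR4 ν H φ) t))^2)

/-- The nonlinear term I₁. -/
def I1def (U Θ H : F2) (φ : ℝ → ℝ) (u v θ h g : F3) : F3 := fun t x y =>
  convU U φ u v u t x y - convB H φ h g h t x y
  + pdxT U t x * deriv φ y * u t x y + U t x * deriv (deriv φ) y * v t x y
  - pdxT H t x * deriv φ y * h t x y - H t x * deriv (deriv φ) y * g t x y
  - U t x * deriv (deriv (deriv φ)) y * θ t x y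
  - U t x * deriv (deriv φ) y * pdy θ t x y

/-- The nonlinear term I₂. -/
def I2def (μ ν cv : ℝ) (U Θ H : F2) (φ : ℝ → ℝ) (u v θ h g : F3) : F3 := fun t x y =>
  cv * convU U φ u v θ t x y
  + cv * pdxT Θ t x * deriv φ y * u t x y + cv * Θ t x * deriv (deriv φ) y * v t x y
  - μ * θ t x y * (pdy u t x y)^2 - μ * (U t x * deriv (deriv φ) y)^2 * θ t x y
  - 2 * μ * U t x * deriv (deriv φ) y * θ t x y * pdy u t x y
  - μ * Θ t x * deriv φ y * (pdy u t x y)^2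
  - 2 * μ * Θ t x * U t x * deriv φ y * deriv (deriv φ) y * pdy u t x y
  - 2 * μ * U t x * deriv (deriv φ) y * pdy u t x y
  - μ * (pdy u t x y)^2 - ν * (pdy h t x y)^2
  - 2 * ν * H t x * deriv φ y * pdy h t x y

/-- The nonlinear term I₃. -/
def I3def (U H : F2) (φ : ℝ → ℝ) (u v θ h g : F3) : F3 := fun t x y =>
  convU U φ u v h t x y - convB H φ h g u t x y
  + pdxT H t x * deriv φ y * u t x y + H t x * deriv (deriv φ) y * v t x y
  - pdxT U t x * deriv φ y * h t x y - U t x * deriv (deriv φ) y * g t x y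

/-- R₁^β, defined as the left-hand side of equation (3.12)₁ for the good unknown u_β. -/
def R1beta (μ ν : ℝ) (φ : ℝ → ℝ) (U Θ H : F2) (u v θ h g : F3) (b : ℕ × ℕ) : F3 :=
  fun t x y =>
    pdt (goodU φ U H u h b) t x y
    + convU U φ u v (goodU φ U H u h b) t x y
    - convB H φ h g (goodU φ H H h h b) t x y
    + ν * etaF φ U H u h t x y * pdy (goodU φ H H h h b) t x y
    - μ * pdy (fun t' x' y' => (θ t' x' y' + Θ t' x' * deriv φ y' + 1)
        * pdy (goodU φ U H u h b) t' x' y') t x y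
    - μ * pdy (fun t' x' y' => (θ t' x' y' + Θ t' x' * deriv φ y' + 1)
        * (pdy (etaF φ U H u h) t' x' y' * dtau b.1 b.2 (psiF h) t' x' y'
           + etaF φ U H u h t' x' y' * dtau b.1 b.2 h t' x' y')) t x y

/-- R₂^β, defined as the left-hand side of equation (3.12)₂ for the good unknown θ_β. -/
def R2beta (κ ν cv : ℝ) (φ : ℝ → ℝ) (U Θ H : F2) (u v θ h g : F3) (b : ℕ × ℕ) : F3 :=
  fun t x y =>
    cv * (pdt (goodU φ Θ H θ h b) t x y + convU U φ u v (goodU φ Θ H θ h b) t x y)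
    - κ * pdy (pdy (goodU φ Θ H θ h b)) t x y
    - κ * pdy (fun t' x' y' => pdy (etaF φ Θ H θ h) t' x' y' * dtau b.1 b.2 (psiF h) t' x' y'
          + etaF φ Θ H θ h t' x' y' * dtau b.1 b.2 h t' x' y') t x y
    + cv * ν * etaF φ Θ H θ h t x y * pdy (goodU φ H H h h b) t x y

/-- R₃^β, defined as the left-hand side of equation (3.12)₃ for the good unknown h_β. -/
def R3beta (ν : ℝ) (φ : ℝ → ℝ) (U Θ H : F2) (u v θ h g : F3) (b : ℕ × ℕ) : F3 :=
  fun t x y =>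
    pdt (goodU φ H H h h b) t x y
    + convU U φ u v (goodU φ H H h h b) t x y
    - convB H φ h g (goodU φ U H u h b) t x y
    - ν * pdy (pdy (goodU φ H H h h b)) t x y


namespace UPA


abbrev uc3 (f : F3) : ℝ × ℝ × ℝ → ℝ := fun p => f p.1 p.2.1 p.2.2

lemma hasDerivAt_slice1 {f : F3} (hf : smooth3 f) (t x y : ℝ) :
    HasDerivAt (fun s => f s x y) (fderiv ℝ (uc3 f) (t,x,y) (1,0,0)) t := by
  have h1 : HasDerivAt (fun s : ℝ => ((s, x, y) : ℝ × ℝ × ℝ)) (1,0,0) t :=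
    (hasDerivAt_id t).prodMk ((hasDerivAt_const t x).prodMk (hasDerivAt_const t y))
  exact ((hf.differentiable (by simp) (t,x,y)).hasFDerivAt).comp_hasDerivAt t h1

lemma hasDerivAt_slice2 {f : F3} (hf : smooth3 f) (t x y : ℝ) :
    HasDerivAt (fun s => f t s y) (fderiv ℝ (uc3 f) (t,x,y) (0,1,0)) x := by
  have h1 : HasDerivAt (fun s : ℝ => ((t, s, y) : ℝ × ℝ × ℝ)) (0,1,0) x :=
    (hasDerivAt_const x t).prodMk ((hasDerivAt_id x).prodMk (hasDerivAt_const x y))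
  exact ((hf.differentiable (by simp) (t,x,y)).hasFDerivAt).comp_hasDerivAt x h1

lemma hasDerivAt_slice3 {f : F3} (hf : smooth3 f) (t x y : ℝ) :
    HasDerivAt (fun s => f t x s) (fderiv ℝ (uc3 f) (t,x,y) (0,0,1)) y := by
  have h1 : HasDerivAt (fun s : ℝ => ((t, x, s) : ℝ × ℝ × ℝ)) (0,0,1) y :=
    (hasDerivAt_const y t).prodMk ((hasDerivAt_const y x).prodMk (hasDerivAt_id y))
  exact ((hf.differentiable (by simp) (t,x,y)).hasFDerivAt).comp_hasDerivAt y h1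

lemma pdt_eq {f : F3} (hf : smooth3 f) (t x y : ℝ) :
    pdt f t x y = fderiv ℝ (uc3 f) (t,x,y) (1,0,0) := (hasDerivAt_slice1 hf t x y).deriv

lemma pdx_eq {f : F3} (hf : smooth3 f) (t x y : ℝ) :
    pdx f t x y = fderiv ℝ (uc3 f) (t,x,y) (0,1,0) := (hasDerivAt_slice2 hf t x y).deriv

lemma pdy_eq {f : F3} (hf : smooth3 f) (t x y : ℝ) :
    pdy f t x y = fderiv ℝ (uc3 f) (t,x,y) (0,0,1) := (hasDerivAt_slice3 hf t x y).deriv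

lemma uc3_pd_eq {f : F3} (hf : smooth3 f) (v : ℝ × ℝ × ℝ)
    (pd : F3 → F3) (hpd : ∀ t x y, pd f t x y = fderiv ℝ (uc3 f) (t,x,y) v) :
    uc3 (pd f) = fun p => fderiv ℝ (uc3 f) p v := by
  funext p
  exact hpd p.1 p.2.1 p.2.2

lemma smooth3_clm {f : F3} (hf : smooth3 f) (v : ℝ × ℝ × ℝ) :
    ContDiff ℝ (⊤ : ℕ∞) (fun p : ℝ × ℝ × ℝ => fderiv ℝ (uc3 f) p v) :=
  (hf.fderiv_right (by exact_mod_cast le_top)).clm_apply contDiff_const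

lemma smooth3_pdt {f : F3} (hf : smooth3 f) : smooth3 (pdt f) := by
  have : uc3 (pdt f) = fun p => fderiv ℝ (uc3 f) p (1,0,0) :=
    uc3_pd_eq hf _ pdt (pdt_eq hf)
  unfold smooth3
  rw [show (fun p : ℝ × ℝ × ℝ => pdt f p.1 p.2.1 p.2.2) = uc3 (pdt f) from rfl, this]
  exact smooth3_clm hf _

lemma smooth3_pdx {f : F3} (hf : smooth3 f) : smooth3 (pdx f) := by
  have : uc3 (pdx f) = fun p => fderiv ℝ (uc3 f) p (0,1,0) :=
    uc3_pd_eq hf _ pdx (pdx_eq hf)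
  unfold smooth3
  rw [show (fun p : ℝ × ℝ × ℝ => pdx f p.1 p.2.1 p.2.2) = uc3 (pdx f) from rfl, this]
  exact smooth3_clm hf _

lemma smooth3_pdy {f : F3} (hf : smooth3 f) : smooth3 (pdy f) := by
  have : uc3 (pdy f) = fun p => fderiv ℝ (uc3 f) p (0,0,1) :=
    uc3_pd_eq hf _ pdy (pdy_eq hf)
  unfold smooth3
  rw [show (fun p : ℝ × ℝ × ℝ => pdy f p.1 p.2.1 p.2.2) = uc3 (pdy f) from rfl, this]
  exact smooth3_clm hf _


lemma pdt_pdx_comm {f : F3} (hf : smooth3 f) : pdt (pdx f) = pdx (pdt f) := by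
  funext t x y
  have hdiff : ∀ p, HasFDerivAt (uc3 f) (fderiv ℝ (uc3 f) p) p :=
    fun p => (hf.differentiable (by simp) p).hasFDerivAt
  have hd2 : Differentiable ℝ (fderiv ℝ (uc3 f)) :=
    (hf.fderiv_right (m := (⊤:ℕ∞)) (by exact_mod_cast le_top)).differentiable
      (by simp)
  have hsym := second_derivative_symmetric (f := uc3 f) (f' := fderiv ℝ (uc3 f))
    (f'' := fderiv ℝ (fderiv ℝ (uc3 f)) (t,x,y)) hdiff (hd2 (t,x,y)).hasFDerivAt
  have key : ∀ (v w : ℝ × ℝ × ℝ),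
      fderiv ℝ (fun p => fderiv ℝ (uc3 f) p v) (t,x,y) w
        = fderiv ℝ (fderiv ℝ (uc3 f)) (t,x,y) w v := by
    intro v w
    have : (fun p => fderiv ℝ (uc3 f) p v)
        = fun p => (fderiv ℝ (uc3 f) p) ((fun _ => v) p) := rfl
    rw [this, fderiv_clm_apply (hd2 (t,x,y)) (differentiableAt_const v)]
    simp
  have h1 : pdt (pdx f) t x y = fderiv ℝ (fderiv ℝ (uc3 f)) (t,x,y) (1,0,0) (0,1,0) := by
    rw [pdt_eq (smooth3_pdx hf) t x y,
      uc3_pd_eq hf _ pdx (pdx_eq hf), key]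
  have h2 : pdx (pdt f) t x y = fderiv ℝ (fderiv ℝ (uc3 f)) (t,x,y) (0,1,0) (1,0,0) := by
    rw [pdx_eq (smooth3_pdt hf) t x y,
      uc3_pd_eq hf _ pdt (pdt_eq hf), key]
  rw [h1, h2, hsym]

lemma smooth3_pdt_iter {f : F3} (hf : smooth3 f) (n : ℕ) : smooth3 (pdt^[n] f) := by
  induction n with
  | zero => exact hf
  | succ n ih => rw [Function.iterate_succ_apply']; exact smooth3_pdt ih

lemma smooth3_pdx_iter {f : F3} (hf : smooth3 f) (n : ℕ) : smooth3 (pdx^[n] f) := by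
  induction n with
  | zero => exact hf
  | succ n ih => rw [Function.iterate_succ_apply']; exact smooth3_pdx ih

lemma smooth3_pdy_iter {f : F3} (hf : smooth3 f) (n : ℕ) : smooth3 (pdy^[n] f) := by
  induction n with
  | zero => exact hf
  | succ n ih => rw [Function.iterate_succ_apply']; exact smooth3_pdy ih

lemma smooth3_Dop {f : F3} (hf : smooth3 f) (b1 b2 k : ℕ) : smooth3 (Dop b1 b2 k f) :=
  smooth3_pdt_iter (smooth3_pdx_iter (smooth3_pdy_iter hf k) b2) b1

lemma pdx_pdt_iter {f : F3} (hf : smooth3 f) (n : ℕ) :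
    pdx (pdt^[n] f) = pdt^[n] (pdx f) := by
  induction n generalizing f with
  | zero => rfl
  | succ n ih =>
      rw [Function.iterate_succ_apply, Function.iterate_succ_apply,
        ih (smooth3_pdt hf), pdt_pdx_comm hf]

lemma pdx_Dop_tang {f : F3} (hf : smooth3 f) (b1 b2 : ℕ) :
    pdx (Dop b1 b2 0 f) = Dop b1 (b2+1) 0 f := by
  unfold Dop
  simp only [Function.iterate_zero, id_eq]
  rw [pdx_pdt_iter (smooth3_pdx_iter hf b2) b1, ← Function.iterate_succ_apply' pdx b2 f]

lemma cont_uc3 {f : F3} (hf : smooth3 f) : Continuous (uc3 f) := hf.continuous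

lemma contXY {f : F3} (hf : smooth3 f) (t : ℝ) :
    Continuous (fun p : ℝ × ℝ => f t p.1 p.2) :=
  (cont_uc3 hf).comp (continuous_const.prodMk continuous_id)

lemma contSliceX {f : F3} (hf : smooth3 f) (t z : ℝ) :
    Continuous (fun w : ℝ => f t w z) :=
  (contXY hf t).comp (continuous_id.prodMk continuous_const)

lemma contSliceY {f : F3} (hf : smooth3 f) (t w : ℝ) :
    Continuous (fun z : ℝ => f t w z) :=
  (contXY hf t).comp (continuous_const.prodMk continuous_id)

lemma hasDerivAt_pdx {f : F3} (hf : smooth3 f) (t x y : ℝ) :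
    HasDerivAt (fun s => f t s y) (pdx f t x y) x := by
  rw [pdx_eq hf t x y]; exact hasDerivAt_slice2 hf t x y

lemma hasDerivAt_pdt {f : F3} (hf : smooth3 f) (t x y : ℝ) :
    HasDerivAt (fun s => f s x y) (pdt f t x y) t := by
  rw [pdt_eq hf t x y]; exact hasDerivAt_slice1 hf t x y





lemma pdt_psiF {f : F3} (hf : smooth3 f) : pdt (psiF f) = psiF (pdt f) := by
  funext t x y
  have hK : IsCompact ((Metric.closedBall t 1) ×ˢ (({x} : Set ℝ) ×ˢ uIcc (0:ℝ) y)) :=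
    (isCompact_closedBall t 1).prod (isCompact_singleton.prod isCompact_uIcc)
  obtain ⟨M, hM⟩ := hK.exists_bound_of_continuousOn (cont_uc3 (smooth3_pdt hf)).continuousOn
  have hbd : ∀ᵐ z ∂(volume : Measure ℝ), z ∈ Set.uIoc (0:ℝ) y →
      ∀ s ∈ Metric.ball t 1, ‖pdt f s x z‖ ≤ M := by
    refine Filter.Eventually.of_forall fun z hz s hs => ?_
    exact hM (s, x, z) ⟨Metric.ball_subset_closedBall hs, rfl, uIoc_subset_uIcc hz⟩
  have key := intervalIntegral.hasDerivAt_integral_of_dominated_loc_of_deriv_le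
    (F := fun s z => f s x z) (F' := fun s z => pdt f s x z) (x₀ := t) (bound := fun _ => M)
    (a := 0) (b := y) (μ := volume) (Metric.ball_mem_nhds _ one_pos)
    (Filter.Eventually.of_forall fun s => (contSliceY hf s x).aestronglyMeasurable)
    ((contSliceY hf t x).intervalIntegrable 0 y)
    ((contSliceY (smooth3_pdt hf) t x).aestronglyMeasurable)
    hbd
    intervalIntegrable_const
    (Filter.Eventually.of_forall fun z hz s hs => hasDerivAt_pdt hf s x z)
  exact key.2.deriv

lemma pdx_psiF {f : F3} (hf : smooth3 f) : pdx (psiF f) = psiF (pdx f) := by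
  funext t x y
  have hK : IsCompact ((({t} : Set ℝ)) ×ˢ ((Metric.closedBall x 1) ×ˢ uIcc (0:ℝ) y)) :=
    isCompact_singleton.prod ((isCompact_closedBall x 1).prod isCompact_uIcc)
  obtain ⟨M, hM⟩ := hK.exists_bound_of_continuousOn (cont_uc3 (smooth3_pdx hf)).continuousOn
  have hbd : ∀ᵐ z ∂(volume : Measure ℝ), z ∈ Set.uIoc (0:ℝ) y →
      ∀ s ∈ Metric.ball x 1, ‖pdx f t s z‖ ≤ M := by
    refine Filter.Eventually.of_forall fun z hz s hs => ?_
    exact hM (t, s, z) ⟨rfl, Metric.ball_subset_closedBall hs, uIoc_subset_uIcc hz⟩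
  have key := intervalIntegral.hasDerivAt_integral_of_dominated_loc_of_deriv_le
    (F := fun s z => f t s z) (F' := fun s z => pdx f t s z) (x₀ := x) (bound := fun _ => M)
    (a := 0) (b := y) (μ := volume) (Metric.ball_mem_nhds _ one_pos)
    (Filter.Eventually.of_forall fun s => (contSliceY hf t s).aestronglyMeasurable)
    ((contSliceY hf t x).intervalIntegrable 0 y)
    ((contSliceY (smooth3_pdx hf) t x).aestronglyMeasurable)
    hbd
    intervalIntegrable_const
    (Filter.Eventually.of_forall fun z hz s hs => hasDerivAt_pdx hf t s z)
  exact key.2.deriv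

lemma pdx_iter_psiF {f : F3} (hf : smooth3 f) (n : ℕ) :
    pdx^[n] (psiF f) = psiF (pdx^[n] f) := by
  induction n generalizing f with
  | zero => rfl
  | succ n ih =>
      rw [Function.iterate_succ_apply, Function.iterate_succ_apply, pdx_psiF hf,
        ih (smooth3_pdx hf)]

lemma pdt_iter_psiF {f : F3} (hf : smooth3 f) (n : ℕ) :
    pdt^[n] (psiF f) = psiF (pdt^[n] f) := by
  induction n generalizing f with
  | zero => rfl
  | succ n ih =>
      rw [Function.iterate_succ_apply, Function.iterate_succ_apply, pdt_psiF hf,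
        ih (smooth3_pdt hf)]

lemma dtau_psiF {h : F3} (hh : smooth3 h) (b1 b2 : ℕ) :
    dtau b1 b2 (psiF h) = psiF (Dop b1 b2 0 h) := by
  unfold dtau Dop
  simp only [Function.iterate_zero, id_eq]
  rw [pdx_iter_psiF hh b2, pdt_iter_psiF (smooth3_pdx_iter hh b2) b1]





lemma lint_omega (f : ℝ × ℝ → ENNReal) (hf : Measurable f) :
    ∫⁻ p in OmegaSet, f p = ∫⁻ w in Icc (0:ℝ) 1, ∫⁻ z in Ici (0:ℝ), f (w, z) := by
  have hres : (volume : Measure (ℝ × ℝ)).restrict (Icc (0:ℝ) 1 ×ˢ Ici (0:ℝ))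
      = ((volume : Measure ℝ).restrict (Icc 0 1)).prod ((volume : Measure ℝ).restrict (Ici 0)) :=
    (Measure.prod_restrict _ _).symm
  rw [show OmegaSet = Icc (0:ℝ) 1 ×ˢ Ici (0:ℝ) from rfl, hres,
    MeasureTheory.lintegral_prod _ hf.aemeasurable]

lemma conv_lemma (v : ℝ → ℝ → ℝ) (hm : Measurable fun p : ℝ × ℝ => v p.1 p.2)
    (hi : IntegrableOn (fun p : ℝ × ℝ => v p.1 p.2) OmegaSet)
    (hnn : ∀ p ∈ OmegaSet, 0 ≤ v p.1 p.2) :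
    ∫⁻ w in Icc (0:ℝ) 1, ∫⁻ z in Ici (0:ℝ), ENNReal.ofReal (v w z)
      = ENNReal.ofReal (∫ p in OmegaSet, v p.1 p.2) := by
  have hOm : MeasurableSet OmegaSet := measurableSet_Icc.prod measurableSet_Ici
  rw [← lint_omega (fun p => ENNReal.ofReal (v p.1 p.2)) (ENNReal.measurable_ofReal.comp hm)]
  rw [ofReal_integral_eq_lintegral_ofReal hi
    (((ae_restrict_mem hOm).mono fun p hp => hnn p hp))]

lemma core_ftc (u u' : ℝ → ℝ → ℝ)
    (hum : Measurable fun p : ℝ × ℝ => u p.1 p.2)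
    (hu'm : Measurable fun p : ℝ × ℝ => u' p.1 p.2)
    (hu'c : ∀ z, Continuous fun w => u' w z)
    (hd : ∀ z w, HasDerivAt (fun s => u s z) (u' w z) w)
    (x : ℝ) (hx : x ∈ Icc (0:ℝ) 1) :
    ∫⁻ z in Ici (0:ℝ), ENNReal.ofReal (u x z)
      ≤ (∫⁻ w in Icc (0:ℝ) 1, ∫⁻ z in Ici (0:ℝ), ENNReal.ofReal (u w z))
        + ∫⁻ w in Icc (0:ℝ) 1, ∫⁻ z in Ici (0:ℝ), ENNReal.ofReal |u' w z| := by
  set D : ℝ → ℝ := fun z => ∫ s in Icc (0:ℝ) 1, |u' s z| with hD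
  have hDint : ∀ z, IntegrableOn (fun s => |u' s z|) (Icc (0:ℝ) 1) :=
    fun z => ((hu'c z).abs).integrableOn_Icc
  have step1 : ∀ z, ∀ w ∈ Icc (0:ℝ) 1, u x z ≤ u w z + D z := by
    intro z w hw
    have hftc : ∫ s in w..x, u' s z = u x z - u w z :=
      intervalIntegral.integral_eq_sub_of_hasDerivAt (fun s _ => hd z s)
        ((hu'c z).intervalIntegrable w x)
    have hsub : Set.uIoc w x ⊆ Icc (0:ℝ) 1 := by
      refine (uIoc_subset_uIcc).trans ?_
      rw [uIcc_eq_union]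
      exact union_subset (Icc_subset_Icc hw.1 hx.2) (Icc_subset_Icc hx.1 hw.2)
    have habs : |∫ s in w..x, u' s z| ≤ D z := by
      rcases le_total w x with hwx | hwx
      · calc |∫ s in w..x, u' s z| ≤ ∫ s in w..x, |u' s z| :=
              intervalIntegral.abs_integral_le_integral_abs hwx
          _ = ∫ s in Ioc w x, |u' s z| := intervalIntegral.integral_of_le hwx
          _ ≤ D z := setIntegral_mono_set (hDint z)
              (Filter.Eventually.of_forall fun s => abs_nonneg _)
              ((Set.Ioc_subset_Icc_self.trans (Icc_subset_Icc hw.1 hx.2)).eventuallyLE)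
      · rw [intervalIntegral.integral_symm x w, abs_neg]
        calc |∫ s in x..w, u' s z| ≤ ∫ s in x..w, |u' s z| :=
              intervalIntegral.abs_integral_le_integral_abs hwx
          _ = ∫ s in Ioc x w, |u' s z| := intervalIntegral.integral_of_le hwx
          _ ≤ D z := setIntegral_mono_set (hDint z)
              (Filter.Eventually.of_forall fun s => abs_nonneg _)
              ((Set.Ioc_subset_Icc_self.trans (Icc_subset_Icc hx.1 hw.2)).eventuallyLE)
    have := abs_le.mp habs
    linarith [hftc ▸ this.1, hftc ▸ this.2]
  have step3 : ∀ z, ENNReal.ofReal (D z) ≤ ∫⁻ s in Icc (0:ℝ) 1, ENNReal.ofReal |u' s z| := by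
    intro z
    rw [ofReal_integral_eq_lintegral_ofReal (hDint z)
      (Filter.Eventually.of_forall fun s => abs_nonneg _)]
  have step2 : ∀ z, ENNReal.ofReal (u x z)
      ≤ (∫⁻ w in Icc (0:ℝ) 1, ENNReal.ofReal (u w z))
        + ∫⁻ s in Icc (0:ℝ) 1, ENNReal.ofReal |u' s z| := by
    intro z
    have h1 : ENNReal.ofReal (u x z) ≤ ENNReal.ofReal (u x z - D z) + ENNReal.ofReal (D z) :=
      calc ENNReal.ofReal (u x z) = ENNReal.ofReal ((u x z - D z) + D z) := by rw [sub_add_cancel]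
        _ ≤ _ := ENNReal.ofReal_add_le
    have h2 : ENNReal.ofReal (u x z - D z) ≤ ∫⁻ w in Icc (0:ℝ) 1, ENNReal.ofReal (u w z) := by
      have hone : ∫⁻ _ in Icc (0:ℝ) 1, ENNReal.ofReal (u x z - D z) ∂(volume : Measure ℝ)
          = ENNReal.ofReal (u x z - D z) := by
        rw [setLIntegral_const, Real.volume_Icc]
        norm_num
      rw [← hone]
      refine setLIntegral_mono' measurableSet_Icc fun w hw => ?_
      exact ENNReal.ofReal_le_ofReal (by linarith [step1 z w hw])
    exact h1.trans (add_le_add h2 (step3 z))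
  have hmeas1 : Measurable fun z => ∫⁻ w in Icc (0:ℝ) 1, ENNReal.ofReal (u w z) := by
    exact Measurable.lintegral_prod_left' (f := fun p : ℝ × ℝ => ENNReal.ofReal (u p.1 p.2))
      (ENNReal.measurable_ofReal.comp hum)
  have hmeas2 : Measurable fun z => ∫⁻ s in Icc (0:ℝ) 1, ENNReal.ofReal |u' s z| := by
    exact Measurable.lintegral_prod_left' (f := fun p : ℝ × ℝ => ENNReal.ofReal |u' p.1 p.2|)
      (ENNReal.measurable_ofReal.comp hu'm.abs)
  calc ∫⁻ z in Ici (0:ℝ), ENNReal.ofReal (u x z)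
      ≤ ∫⁻ z in Ici (0:ℝ), ((∫⁻ w in Icc (0:ℝ) 1, ENNReal.ofReal (u w z))
          + ∫⁻ s in Icc (0:ℝ) 1, ENNReal.ofReal |u' s z|) := lintegral_mono step2
    _ = (∫⁻ z in Ici (0:ℝ), ∫⁻ w in Icc (0:ℝ) 1, ENNReal.ofReal (u w z))
          + ∫⁻ z in Ici (0:ℝ), ∫⁻ s in Icc (0:ℝ) 1, ENNReal.ofReal |u' s z| :=
        lintegral_add_left hmeas1 _
    _ = _ := by
        rw [lintegral_lintegral_swap
            (f := fun z w => ENNReal.ofReal (u w z))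
            ((ENNReal.measurable_ofReal.comp (hum.comp measurable_swap)).aemeasurable),
          lintegral_lintegral_swap
            (f := fun z w => ENNReal.ofReal |u' w z|)
            ((ENNReal.measurable_ofReal.comp (hu'm.abs.comp measurable_swap)).aemeasurable)]


lemma psi_sq_bound (lam : ℝ) (hlam : 1/2 < lam) (Hh : ℝ → ℝ → ℝ)
    (hHc : ∀ x, Continuous fun z => Hh x z)
    (x y : ℝ) (hy : 0 ≤ y) :
    ENNReal.ofReal ((∫ z in (0:ℝ)..y, Hh x z)^2)
      ≤ ENNReal.ofReal ((1+y) ^ (max (2*lam-2) 0 + 1))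
        * ∫⁻ z in Ici (0:ℝ), ENNReal.ofReal ((1+z) ^ (2*(1-lam)) * (Hh x z)^2) := by
  set m0 := max (2*lam-2) 0 with hm0
  set R := ∫ z in (0:ℝ)..y, |Hh x z| with hRdef
  have hR0 : 0 ≤ R := intervalIntegral.integral_nonneg hy fun z _ => abs_nonneg _
  have h1 : |∫ z in (0:ℝ)..y, Hh x z| ≤ R := intervalIntegral.abs_integral_le_integral_abs hy
  have hsq : ENNReal.ofReal ((∫ z in (0:ℝ)..y, Hh x z)^2) ≤ ENNReal.ofReal R ^ 2 := by
    rw [← ENNReal.ofReal_pow hR0]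
    apply ENNReal.ofReal_le_ofReal
    calc (∫ z in (0:ℝ)..y, Hh x z)^2 = |∫ z in (0:ℝ)..y, Hh x z|^2 := (sq_abs _).symm
      _ ≤ R^2 := pow_le_pow_left₀ (abs_nonneg _) h1 2
  have hRint : IntegrableOn (fun z => |Hh x z|) (Ioc (0:ℝ) y) := ((hHc x).abs).integrableOn_Ioc
  have hRl : ENNReal.ofReal R = ∫⁻ z in Ioc (0:ℝ) y, ENNReal.ofReal |Hh x z| := by
    rw [hRdef, intervalIntegral.integral_of_le hy]
    exact ofReal_integral_eq_lintegral_ofReal hRint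
      (Filter.Eventually.of_forall fun z => abs_nonneg _)
  set a : ℝ → ENNReal := fun z => ENNReal.ofReal ((1+z) ^ (lam - 1)) with ha
  set b : ℝ → ENNReal := fun z => ENNReal.ofReal ((1+z) ^ (1 - lam) * |Hh x z|) with hb
  have hma : Measurable a := by
    apply ENNReal.measurable_ofReal.comp
    fun_prop
  have hmb : Measurable b := by
    apply ENNReal.measurable_ofReal.comp
    have : Measurable fun z => |Hh x z| := (hHc x).abs.measurable
    fun_prop
  have hsplit : ∫⁻ z in Ioc (0:ℝ) y, ENNReal.ofReal |Hh x z|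
      = ∫⁻ z in Ioc (0:ℝ) y, (a * b) z := by
    refine setLIntegral_congr_fun measurableSet_Ioc
      (fun z hz => ?_)
    have hz1 : (0:ℝ) < 1 + z := by linarith [hz.1]
    have e0 : (lam - 1) + (1 - lam) = 0 := by ring
    have : (1+z) ^ (lam - 1) * ((1+z) ^ (1 - lam) * |Hh x z|) = |Hh x z| := by
      rw [← mul_assoc, ← Real.rpow_add hz1, e0, Real.rpow_zero, one_mul]
    simp only [a, b, Pi.mul_apply, ← ENNReal.ofReal_mul (Real.rpow_nonneg hz1.le _), this]
  set A := ∫⁻ z in Ioc (0:ℝ) y, a z ^ (2:ℝ) with hA'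
  set B := ∫⁻ z in Ioc (0:ℝ) y, b z ^ (2:ℝ) with hB'
  have hholder : ∫⁻ z in Ioc (0:ℝ) y, (a * b) z ≤ A ^ (1/2:ℝ) * B ^ (1/2:ℝ) :=
    ENNReal.lintegral_mul_le_Lp_mul_Lq _ Real.HolderConjugate.two_two
      hma.aemeasurable hmb.aemeasurable
  have hAB : (A ^ (1/2:ℝ) * B ^ (1/2:ℝ))^(2:ℕ) = A * B := by
    rw [mul_pow, ← ENNReal.rpow_natCast (A ^ (1/2:ℝ)) 2, ← ENNReal.rpow_natCast (B ^ (1/2:ℝ)) 2,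
      ← ENNReal.rpow_mul, ← ENNReal.rpow_mul]
    norm_num
  have hy1 : (0:ℝ) < 1 + y := by linarith
  have hAbound : A ≤ ENNReal.ofReal ((1+y) ^ (m0 + 1)) := by
    have hptA : ∀ z ∈ Ioc (0:ℝ) y, a z ^ (2:ℝ) ≤ ENNReal.ofReal ((1+y) ^ m0) := by
      intro z hz
      have hz1 : (0:ℝ) < 1 + z := by linarith [hz.1]
      rw [ha, ENNReal.ofReal_rpow_of_nonneg (Real.rpow_nonneg hz1.le _) (by norm_num : (0:ℝ) ≤ 2),
        ← Real.rpow_mul hz1.le]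
      apply ENNReal.ofReal_le_ofReal
      calc (1+z) ^ ((lam-1) * 2) ≤ (1+z) ^ m0 := by
            apply Real.rpow_le_rpow_of_exponent_le (by linarith [hz.1])
            rw [hm0]
            have : (lam - 1) * 2 = 2*lam - 2 := by ring
            rw [this]
            exact le_max_left _ _
        _ ≤ (1+y) ^ m0 := Real.rpow_le_rpow hz1.le (by linarith [hz.2]) (le_max_right _ _)
    calc A ≤ ∫⁻ _ in Ioc (0:ℝ) y, ENNReal.ofReal ((1+y) ^ m0) :=
          setLIntegral_mono' measurableSet_Ioc hptA
      _ = ENNReal.ofReal ((1+y) ^ m0) * volume (Ioc (0:ℝ) y) := setLIntegral_const _ _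
      _ = ENNReal.ofReal ((1+y) ^ m0) * ENNReal.ofReal (y - 0) := by rw [Real.volume_Ioc]
      _ ≤ ENNReal.ofReal ((1+y) ^ m0 * (1+y)) := by
          rw [← ENNReal.ofReal_mul (Real.rpow_nonneg hy1.le _)]
          apply ENNReal.ofReal_le_ofReal
          apply mul_le_mul_of_nonneg_left (by linarith) (Real.rpow_nonneg hy1.le _)
      _ = ENNReal.ofReal ((1+y) ^ (m0 + 1)) := by
          rw [Real.rpow_add hy1, Real.rpow_one]
  have hBbound : B ≤ ∫⁻ z in Ici (0:ℝ), ENNReal.ofReal ((1+z) ^ (2*(1-lam)) * (Hh x z)^2) := by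
    have hcongr : B = ∫⁻ z in Ioc (0:ℝ) y, ENNReal.ofReal ((1+z) ^ (2*(1-lam)) * (Hh x z)^2) := by
      rw [hB']
      refine setLIntegral_congr_fun measurableSet_Ioc
        (fun z hz => ?_)
      have hz1 : (0:ℝ) < 1 + z := by linarith [hz.1]
      rw [hb, ENNReal.ofReal_rpow_of_nonneg
        (mul_nonneg (Real.rpow_nonneg hz1.le _) (abs_nonneg _)) (by norm_num : (0:ℝ) ≤ 2)]
      congr 1
      rw [Real.mul_rpow (Real.rpow_nonneg hz1.le _) (abs_nonneg _), ← Real.rpow_mul hz1.le]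
      have h2 : ((2:ℝ)) = ((2:ℕ):ℝ) := by norm_num
      rw [show (1 - lam) * 2 = 2*(1-lam) by ring]
      congr 1
      rw [h2, Real.rpow_natCast, sq_abs]
    rw [hcongr]
    apply lintegral_mono_set (Set.Ioc_subset_Icc_self.trans (Set.Icc_subset_Ici_self))
  calc ENNReal.ofReal ((∫ z in (0:ℝ)..y, Hh x z)^2) ≤ ENNReal.ofReal R ^ 2 := hsq
    _ = (∫⁻ z in Ioc (0:ℝ) y, (a*b) z) ^ 2 := by rw [hRl, hsplit]
    _ ≤ (A ^ (1/2:ℝ) * B ^ (1/2:ℝ))^(2:ℕ) := pow_le_pow_left₀ (by positivity) hholder 2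
    _ = A * B := hAB
    _ ≤ ENNReal.ofReal ((1+y) ^ (m0 + 1))
        * ∫⁻ z in Ici (0:ℝ), ENNReal.ofReal ((1+z) ^ (2*(1-lam)) * (Hh x z)^2) :=
      mul_le_mul' hAbound hBbound





lemma hOm : MeasurableSet OmegaSet := measurableSet_Icc.prod measurableSet_Ici

lemma omega_mem {p : ℝ × ℝ} (hp : p ∈ OmegaSet) : p.1 ∈ Set.Icc (0:ℝ) 1 ∧ 0 ≤ p.2 := by
  rw [OmegaSet, Set.mem_prod] at hp
  exact ⟨hp.1, hp.2⟩

lemma HcalSq_nonneg (m : ℕ) (l : ℝ) (f : F3) (t : ℝ) : 0 ≤ HcalSq m l f t :=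
  Finset.sum_nonneg fun _ _ => sq_nonneg _

lemma mem_idx3 {m a1 a2 a3 : ℕ} (hle : a1 + a2 + a3 ≤ m) : (a1, a2, a3) ∈ idx3 m := by
  simp only [idx3, Finset.mem_filter, Finset.mem_product, Finset.mem_range]
  omega

lemma int_le_lint (f : ℝ × ℝ → ℝ) (hnn : ∀ p ∈ OmegaSet, 0 ≤ f p) :
    ∫ p in OmegaSet, f p ≤ (∫⁻ p in OmegaSet, ENNReal.ofReal (f p)).toReal := by
  by_cases hi : IntegrableOn f OmegaSet volume
  · rw [integral_eq_lintegral_of_nonneg_ae ((ae_restrict_mem hOm).mono hnn)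
      hi.aestronglyMeasurable]
  · rw [integral_undef hi]
    exact ENNReal.toReal_nonneg

lemma term_le (m : ℕ) (l0 : ℝ) (f : F3) (t : ℝ) (a1 a2 a3 : ℕ) (hle : a1 + a2 + a3 ≤ m)
    (hI : MemHcal m l0 f t) :
    ∫ p in OmegaSet, (1 + p.2) ^ (2 * (l0 + (a3:ℝ))) * (Dop a1 a2 a3 f t p.1 p.2)^2
      ≤ HcalSq m l0 f t := by
  have h0 : 0 ≤ ∫ p in OmegaSet,
      (1 + p.2) ^ (2 * (l0 + (a3:ℝ))) * (Dop a1 a2 a3 f t p.1 p.2)^2 := by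
    refine setIntegral_nonneg hOm fun p hp => ?_
    have : (0:ℝ) ≤ 1 + p.2 := by have := (omega_mem hp).2; linarith
    exact mul_nonneg (Real.rpow_nonneg this _) (sq_nonneg _)
  have heq : (L2l (l0 + (a3:ℝ)) (Dop a1 a2 a3 f t))^2
      = ∫ p in OmegaSet, (1 + p.2) ^ (2 * (l0 + (a3:ℝ))) * (Dop a1 a2 a3 f t p.1 p.2)^2 := by
    rw [L2l]
    exact Real.sq_sqrt h0
  have hsum := Finset.single_le_sum (f := fun a : ℕ × ℕ × ℕ =>
    (L2l (l0 + (a.2.2 : ℝ)) (Dop a.1 a.2.1 a.2.2 f t))^2)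
    (fun _ _ => sq_nonneg _) (mem_idx3 hle)
  rw [HcalSq]
  exact le_of_eq heq.symm |>.trans hsum


lemma pdx_Dop {f : F3} (hf : smooth3 f) (b1 b2 k : ℕ) :
    pdx (Dop b1 b2 k f) = Dop b1 (b2+1) k f := by
  unfold Dop
  rw [pdx_pdt_iter (smooth3_pdx_iter (smooth3_pdy_iter hf k) b2) b1,
    ← Function.iterate_succ_apply' pdx b2 ((pdy^[k]) f)]

set_option maxHeartbeats 2000000 in
lemma big (m : ℕ) (hm : 1 ≤ m) (lam : ℝ) (hlam : 1/2 < lam) (l : ℝ)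
    (b1 b2 k bt1 bt2 : ℕ) (hsum : b1 + b2 + k + (bt1 + bt2) ≤ m)
    (g h : F3) (hg : smooth3 g) (hh : smooth3 h) (t : ℝ)
    (hgI : MemHcal m (l + lam) g t) (hhI : MemHcal m (1 - lam) h t) :
    L2l (l + (k:ℝ)) (fun x y => Dop b1 b2 k g t x y * dtau bt1 bt2 (psiF h) t x y)
      ≤ 2 * Real.sqrt (HcalSq m (l + lam) g t) * Real.sqrt (HcalSq m (1 - lam) h t) := by
  set Sg := HcalSq m (l + lam) g t with hSg
  set Sh := HcalSq m (1 - lam) h t with hSh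
  have hSg0 : 0 ≤ Sg := HcalSq_nonneg _ _ _ _
  have hSh0 : 0 ≤ Sh := HcalSq_nonneg _ _ _ _
  set G : ℝ → ℝ → ℝ := fun x y => Dop b1 b2 k g t x y with hG
  set Hf : ℝ → ℝ → ℝ := fun x z => Dop bt1 bt2 0 h t x z with hHf
  have hGsm : smooth3 (Dop b1 b2 k g) := smooth3_Dop hg b1 b2 k
  have hHsm : smooth3 (Dop bt1 bt2 0 h) := smooth3_Dop hh bt1 bt2 0
  have hGc : Continuous fun p : ℝ × ℝ => G p.1 p.2 := contXY hGsm t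
  have hHc : Continuous fun p : ℝ × ℝ => Hf p.1 p.2 := contXY hHsm t
  set cG : ℝ := 2 * ((l + lam) + (k:ℝ)) with hcG
  set jex : ℝ := 2 * (1 - lam) with hjex
  set J : ℝ → ENNReal := fun x => ∫⁻ z in Ici (0:ℝ),
    ENNReal.ofReal ((1+z) ^ jex * (Hf x z)^2) with hJ
  set Phi : ℝ → ENNReal := fun x => ∫⁻ y in Ici (0:ℝ),
    ENNReal.ofReal ((1+y) ^ cG * (G x y)^2) with hPhi
  have hmeasW : ∀ c : ℝ, Measurable fun z : ℝ => (1+z) ^ c := by intro c; fun_prop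
  have hmGj : Measurable fun p : ℝ × ℝ => (1+p.2) ^ cG * (G p.1 p.2)^2 :=
    ((hmeasW cG).comp measurable_snd).mul (hGc.measurable.pow_const 2)
  have hmHj : Measurable fun p : ℝ × ℝ => (1+p.2) ^ jex * (Hf p.1 p.2)^2 :=
    ((hmeasW jex).comp measurable_snd).mul (hHc.measurable.pow_const 2)
  have hJm : Measurable J := by
    rw [hJ]
    exact Measurable.lintegral_prod_right' (ENNReal.measurable_ofReal.comp hmHj)
  have hPhim : Measurable Phi := by
    rw [hPhi]
    exact Measurable.lintegral_prod_right' (ENNReal.measurable_ofReal.comp hmGj)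
  have hpsi : dtau bt1 bt2 (psiF h) = psiF (Dop bt1 bt2 0 h) := dtau_psiF hh bt1 bt2
  -- pointwise bound on Omega
  have hpt : ∀ p ∈ OmegaSet,
      ENNReal.ofReal ((1 + p.2) ^ (2*(l + (k:ℝ)))
        * (G p.1 p.2 * psiF (Dop bt1 bt2 0 h) t p.1 p.2)^2)
        ≤ ENNReal.ofReal ((1+p.2) ^ cG * (G p.1 p.2)^2) * J p.1 := by
    intro p hp
    obtain ⟨hx, hy⟩ := omega_mem hp
    have hy1 : (0:ℝ) < 1 + p.2 := by linarith
    have hW0 : 0 ≤ (1 + p.2) ^ (2*(l + (k:ℝ))) := Real.rpow_nonneg hy1.le _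
    have hpsiB := psi_sq_bound lam hlam Hf (fun x' => contSliceY hHsm t x') p.1 p.2 hy
    have hval : psiF (Dop bt1 bt2 0 h) t p.1 p.2 = ∫ z in (0:ℝ)..p.2, Hf p.1 z := rfl
    rw [hval]
    have hmax1 : max (2*lam-2) 0 + 1 ≤ 2*lam := by
      rcases le_total (2*lam-2) 0 with hc | hc
      · rw [max_eq_right hc]; linarith
      · rw [max_eq_left hc]; linarith
    calc ENNReal.ofReal ((1 + p.2) ^ (2*(l + (k:ℝ))) * (G p.1 p.2 * ∫ z in (0:ℝ)..p.2, Hf p.1 z)^2)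
        = ENNReal.ofReal ((1 + p.2) ^ (2*(l + (k:ℝ))) * (G p.1 p.2)^2)
            * ENNReal.ofReal ((∫ z in (0:ℝ)..p.2, Hf p.1 z)^2) := by
          rw [← ENNReal.ofReal_mul (mul_nonneg hW0 (sq_nonneg _))]
          congr 1
          ring
      _ ≤ ENNReal.ofReal ((1 + p.2) ^ (2*(l + (k:ℝ))) * (G p.1 p.2)^2)
            * (ENNReal.ofReal ((1+p.2) ^ (max (2*lam-2) 0 + 1)) * J p.1) :=
          mul_le_mul_right hpsiB _
      _ = ENNReal.ofReal ((1 + p.2) ^ (2*(l + (k:ℝ))) * (G p.1 p.2)^2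
            * (1+p.2) ^ (max (2*lam-2) 0 + 1)) * J p.1 := by
          rw [ENNReal.ofReal_mul (mul_nonneg hW0 (sq_nonneg _)), mul_assoc]
      _ ≤ ENNReal.ofReal ((1+p.2) ^ cG * (G p.1 p.2)^2) * J p.1 := by
          refine mul_le_mul_left (ENNReal.ofReal_le_ofReal ?_) _
          have hexp : (1+p.2) ^ (2*(l + (k:ℝ))) * (1+p.2) ^ (max (2*lam-2) 0 + 1)
              ≤ (1+p.2) ^ cG := by
            rw [← Real.rpow_add hy1]
            refine Real.rpow_le_rpow_of_exponent_le (by linarith) ?_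
            rw [hcG]
            linarith
          calc (1 + p.2) ^ (2*(l + (k:ℝ))) * (G p.1 p.2)^2 * (1+p.2) ^ (max (2*lam-2) 0 + 1)
              = ((1 + p.2) ^ (2*(l + (k:ℝ))) * (1+p.2) ^ (max (2*lam-2) 0 + 1)) * (G p.1 p.2)^2 := by
                ring
            _ ≤ (1+p.2) ^ cG * (G p.1 p.2)^2 := mul_le_mul_of_nonneg_right hexp (sq_nonneg _)
  -- Tonelli step
  have hlint1 : ∫⁻ p in OmegaSet, ENNReal.ofReal ((1 + p.2) ^ (2*(l + (k:ℝ)))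
        * (G p.1 p.2 * psiF (Dop bt1 bt2 0 h) t p.1 p.2)^2)
      ≤ ∫⁻ x in Icc (0:ℝ) 1, Phi x * J x := by
    refine le_trans (setLIntegral_mono' hOm hpt) ?_
    have hmm : Measurable fun p : ℝ × ℝ =>
        ENNReal.ofReal ((1+p.2) ^ cG * (G p.1 p.2)^2) * J p.1 :=
      (ENNReal.measurable_ofReal.comp hmGj).mul (hJm.comp measurable_fst)
    rw [lint_omega _ hmm]
    refine le_of_eq (setLIntegral_congr_fun measurableSet_Icc
      (fun x _ => ?_))
    have hmi : Measurable fun y : ℝ => ENNReal.ofReal ((1+y) ^ cG * (G x y)^2) :=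
      ENNReal.measurable_ofReal.comp
        ((hmeasW cG).mul ((contSliceY hGsm t x).measurable.pow_const 2))
    show (∫⁻ y in Ici (0:ℝ), ENNReal.ofReal ((1+y) ^ cG * (G x y)^2) * J x) = Phi x * J x
    rw [hPhi]
    exact lintegral_mul_const _ hmi
  -- h-side first double integral (used in both cases)
  set ju : ℝ → ℝ → ℝ := fun w z => (1+z) ^ jex * (Hf w z)^2 with hju
  have hint_ju : IntegrableOn (fun p : ℝ × ℝ => ju p.1 p.2) OmegaSet volume := by
    have := hhI (bt1, bt2, 0) (mem_idx3 (by omega))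
    simpa [hju, hjex, hHf] using this
  have hnn_ju : ∀ p ∈ OmegaSet, 0 ≤ ju p.1 p.2 := fun p hp =>
    mul_nonneg (Real.rpow_nonneg (by linarith [(omega_mem hp).2]) _) (sq_nonneg _)
  have hLju : ∫⁻ w in Icc (0:ℝ) 1, ∫⁻ z in Ici (0:ℝ), ENNReal.ofReal (ju w z)
      ≤ ENNReal.ofReal Sh := by
    rw [conv_lemma ju hmHj hint_ju hnn_ju]
    apply ENNReal.ofReal_le_ofReal
    have := term_le m (1-lam) h t bt1 bt2 0 (by omega) hhI
    rw [hSh]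
    simpa [hju, hjex, hHf] using this
  -- the common sufficiency step
  suffices htot : ∫⁻ p in OmegaSet, ENNReal.ofReal ((1 + p.2) ^ (2*(l + (k:ℝ)))
      * (G p.1 p.2 * psiF (Dop bt1 bt2 0 h) t p.1 p.2)^2) ≤ ENNReal.ofReal (3 * (Sg * Sh)) by
    have hIle : ∫ p in OmegaSet, (1 + p.2) ^ (2*(l + (k:ℝ)))
        * (G p.1 p.2 * psiF (Dop bt1 bt2 0 h) t p.1 p.2)^2 ≤ 3 * (Sg * Sh) := by
      refine le_trans (int_le_lint _ fun p hp => mul_nonneg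
        (Real.rpow_nonneg (by linarith [(omega_mem hp).2]) _) (sq_nonneg _)) ?_
      refine le_trans (ENNReal.toReal_mono ENNReal.ofReal_ne_top htot) ?_
      rw [ENNReal.toReal_ofReal (by positivity)]
    have heqL : (fun x y => Dop b1 b2 k g t x y * dtau bt1 bt2 (psiF h) t x y)
        = fun x y => G x y * psiF (Dop bt1 bt2 0 h) t x y := by
      funext x y
      rw [hpsi]
    rw [heqL]
    have hstep : L2l (l + (k:ℝ)) (fun x y => G x y * psiF (Dop bt1 bt2 0 h) t x y)
        ≤ Real.sqrt (3 * (Sg * Sh)) := by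
      rw [L2l]
      exact Real.sqrt_le_sqrt hIle
    refine hstep.trans ?_
    rw [Real.sqrt_mul (by norm_num : (0:ℝ) ≤ 3), Real.sqrt_mul hSg0]
    have h3 : Real.sqrt 3 ≤ 2 := by
      nlinarith [Real.sq_sqrt (show (0:ℝ) ≤ 3 by norm_num), Real.sqrt_nonneg 3]
    calc Real.sqrt 3 * (Real.sqrt Sg * Real.sqrt Sh)
        ≤ 2 * (Real.sqrt Sg * Real.sqrt Sh) := by
          exact mul_le_mul_of_nonneg_right h3
            (mul_nonneg (Real.sqrt_nonneg _) (Real.sqrt_nonneg _))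
      _ = 2 * Real.sqrt Sg * Real.sqrt Sh := by ring
  -- now prove htot by cases
  refine hlint1.trans ?_
  rcases le_or_gt (bt1 + bt2 + 1) m with hA | hB
  -- CASE A : FTC on the h side
  · set ju' : ℝ → ℝ → ℝ :=
      fun w z => (1+z) ^ jex * (2 * Hf w z * Dop bt1 (bt2+1) 0 h t w z) with hju'
    set ju2 : ℝ → ℝ → ℝ := fun w z => (1+z) ^ jex * (Dop bt1 (bt2+1) 0 h t w z)^2 with hju2
    have hH'sm : smooth3 (Dop bt1 (bt2+1) 0 h) := smooth3_Dop hh bt1 (bt2+1) 0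
    have hd : ∀ z w, HasDerivAt (fun s => ju s z) (ju' w z) w := by
      intro z w
      have h0 : HasDerivAt (fun s => Hf s z) (Dop bt1 (bt2+1) 0 h t w z) w := by
        have h1 := hasDerivAt_pdx hHsm t w z
        rwa [pdx_Dop hh bt1 bt2 0] at h1
      have h2 := (h0.pow 2).const_mul ((1+z) ^ jex)
      have hee : (1+z) ^ jex * (((2:ℕ) : ℝ) * Hf w z ^ (2-1) * Dop bt1 (bt2+1) 0 h t w z)
          = ju' w z := by
        rw [hju']
        push_cast
        ring
      exact hee ▸ h2
    have hju'm : Measurable fun p : ℝ × ℝ => ju' p.1 p.2 :=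
      ((hmeasW jex).comp measurable_snd).mul
        ((measurable_const.mul hHc.measurable).mul (contXY hH'sm t).measurable)
    have hju'c : ∀ z, Continuous fun w => ju' w z := fun z =>
      continuous_const.mul ((continuous_const.mul (contSliceX hHsm t z)).mul
        (contSliceX hH'sm t z))
    have hcore : ∀ x ∈ Icc (0:ℝ) 1, J x ≤
        (∫⁻ w in Icc (0:ℝ) 1, ∫⁻ z in Ici (0:ℝ), ENNReal.ofReal (ju w z))
        + ∫⁻ w in Icc (0:ℝ) 1, ∫⁻ z in Ici (0:ℝ), ENNReal.ofReal |ju' w z| :=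
      fun x hx => core_ftc ju ju' hmHj hju'm hju'c hd x hx
    have hmju2 : Measurable fun p : ℝ × ℝ => ju2 p.1 p.2 :=
      ((hmeasW jex).comp measurable_snd).mul ((contXY hH'sm t).measurable.pow_const 2)
    have hint_ju2 : IntegrableOn (fun p : ℝ × ℝ => ju2 p.1 p.2) OmegaSet volume := by
      have := hhI (bt1, bt2+1, 0) (mem_idx3 (by omega))
      simpa [hju2, hjex] using this
    have hnn_ju2 : ∀ p ∈ OmegaSet, 0 ≤ ju2 p.1 p.2 := fun p hp =>
      mul_nonneg (Real.rpow_nonneg (by linarith [(omega_mem hp).2]) _) (sq_nonneg _)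
    have hLju2 : ∫⁻ w in Icc (0:ℝ) 1, ∫⁻ z in Ici (0:ℝ), ENNReal.ofReal (ju2 w z)
        ≤ ENNReal.ofReal Sh := by
      rw [conv_lemma ju2 hmju2 hint_ju2 hnn_ju2]
      apply ENNReal.ofReal_le_ofReal
      have := term_le m (1-lam) h t bt1 (bt2+1) 0 (by omega) hhI
      rw [hSh]
      simpa [hju2, hjex] using this
    have habs' : ∀ w, ∀ z ∈ Ici (0:ℝ),
        ENNReal.ofReal |ju' w z| ≤ ENNReal.ofReal (ju w z) + ENNReal.ofReal (ju2 w z) := by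
      intro w z hz
      have hz0 : (0:ℝ) ≤ z := hz
      have hw0 : (0:ℝ) ≤ (1+z) ^ jex := Real.rpow_nonneg (by linarith) _
      have habs : |ju' w z| ≤ ju w z + ju2 w z := by
        rw [hju', hju, hju2, abs_mul, abs_of_nonneg hw0, ← mul_add]
        refine mul_le_mul_of_nonneg_left ?_ hw0
        calc |2 * Hf w z * Dop bt1 (bt2+1) 0 h t w z|
            = 2 * |Hf w z| * |Dop bt1 (bt2+1) 0 h t w z| := by
              rw [abs_mul, abs_mul, abs_two]
          _ ≤ |Hf w z|^2 + |Dop bt1 (bt2+1) 0 h t w z|^2 := two_mul_le_add_sq _ _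
          _ = (Hf w z)^2 + (Dop bt1 (bt2+1) 0 h t w z)^2 := by rw [sq_abs, sq_abs]
      exact le_trans (ENNReal.ofReal_le_ofReal habs) ENNReal.ofReal_add_le
    have hLju' : ∫⁻ w in Icc (0:ℝ) 1, ∫⁻ z in Ici (0:ℝ), ENNReal.ofReal |ju' w z|
        ≤ ENNReal.ofReal Sh + ENNReal.ofReal Sh := by
      have hstep : ∀ w : ℝ, ∫⁻ z in Ici (0:ℝ), ENNReal.ofReal |ju' w z|
          ≤ (∫⁻ z in Ici (0:ℝ), ENNReal.ofReal (ju w z))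
            + ∫⁻ z in Ici (0:ℝ), ENNReal.ofReal (ju2 w z) := by
        intro w
        calc ∫⁻ z in Ici (0:ℝ), ENNReal.ofReal |ju' w z|
            ≤ ∫⁻ z in Ici (0:ℝ), (ENNReal.ofReal (ju w z) + ENNReal.ofReal (ju2 w z)) :=
              setLIntegral_mono' measurableSet_Ici (habs' w)
          _ = _ := lintegral_add_left (ENNReal.measurable_ofReal.comp
              ((hmeasW jex).mul ((contSliceY hHsm t w).measurable.pow_const 2))) _
      calc ∫⁻ w in Icc (0:ℝ) 1, ∫⁻ z in Ici (0:ℝ), ENNReal.ofReal |ju' w z|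
          ≤ ∫⁻ w in Icc (0:ℝ) 1, ((∫⁻ z in Ici (0:ℝ), ENNReal.ofReal (ju w z))
              + ∫⁻ z in Ici (0:ℝ), ENNReal.ofReal (ju2 w z)) :=
            setLIntegral_mono' measurableSet_Icc fun w _ => hstep w
        _ = (∫⁻ w in Icc (0:ℝ) 1, ∫⁻ z in Ici (0:ℝ), ENNReal.ofReal (ju w z))
              + ∫⁻ w in Icc (0:ℝ) 1, ∫⁻ z in Ici (0:ℝ), ENNReal.ofReal (ju2 w z) :=
            lintegral_add_left (Measurable.lintegral_prod_right'
              (ENNReal.measurable_ofReal.comp hmHj)) _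
        _ ≤ ENNReal.ofReal Sh + ENNReal.ofReal Sh := add_le_add hLju hLju2
    have hJbar : ∀ x ∈ Icc (0:ℝ) 1,
        J x ≤ ENNReal.ofReal Sh + (ENNReal.ofReal Sh + ENNReal.ofReal Sh) := by
      intro x hx
      exact (hcore x hx).trans (add_le_add hLju hLju')
    have hint_G : IntegrableOn (fun p : ℝ × ℝ => (1+p.2) ^ cG * (G p.1 p.2)^2)
        OmegaSet volume := by
      have := hgI (b1, b2, k) (mem_idx3 (by omega))
      simpa [hG, hcG] using this
    have hnn_G : ∀ p ∈ OmegaSet, 0 ≤ (1+p.2) ^ cG * (G p.1 p.2)^2 := fun p hp =>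
      mul_nonneg (Real.rpow_nonneg (by linarith [(omega_mem hp).2]) _) (sq_nonneg _)
    have hPg_le : ∫ p in OmegaSet, (1+p.2) ^ cG * (G p.1 p.2)^2 ≤ Sg := by
      have := term_le m (l+lam) g t b1 b2 k (by omega) hgI
      rw [hSg]
      simpa [hG, hcG] using this
    have hPhiInt : ∫⁻ x in Icc (0:ℝ) 1, Phi x ≤ ENNReal.ofReal Sg := by
      have hconv := conv_lemma (fun w y => (1+y) ^ cG * (G w y)^2) hmGj hint_G hnn_G
      calc ∫⁻ x in Icc (0:ℝ) 1, Phi x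
          = ENNReal.ofReal (∫ p in OmegaSet, (1+p.2) ^ cG * (G p.1 p.2)^2) := hconv
        _ ≤ ENNReal.ofReal Sg := ENNReal.ofReal_le_ofReal hPg_le
    calc ∫⁻ x in Icc (0:ℝ) 1, Phi x * J x
        ≤ ∫⁻ x in Icc (0:ℝ) 1, Phi x * (ENNReal.ofReal Sh
            + (ENNReal.ofReal Sh + ENNReal.ofReal Sh)) :=
          setLIntegral_mono' measurableSet_Icc fun x hx => mul_le_mul_right (hJbar x hx) _
      _ = (∫⁻ x in Icc (0:ℝ) 1, Phi x) * (ENNReal.ofReal Sh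
            + (ENNReal.ofReal Sh + ENNReal.ofReal Sh)) := lintegral_mul_const _ hPhim
      _ ≤ ENNReal.ofReal Sg * (ENNReal.ofReal Sh
            + (ENNReal.ofReal Sh + ENNReal.ofReal Sh)) := mul_le_mul_left hPhiInt _
      _ = ENNReal.ofReal (3 * (Sg * Sh)) := by
          rw [← ENNReal.ofReal_add hSh0 hSh0, ← ENNReal.ofReal_add hSh0 (by linarith),
            ← ENNReal.ofReal_mul hSg0]
          congr 1
          ring
  -- CASE B : FTC on the g side
  · have hB' : b1 + b2 + k + 1 ≤ m := by omega
    set gu : ℝ → ℝ → ℝ := fun w y => (1+y) ^ cG * (G w y)^2 with hgu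
    set gu' : ℝ → ℝ → ℝ :=
      fun w y => (1+y) ^ cG * (2 * G w y * Dop b1 (b2+1) k g t w y) with hgu'
    set gu2 : ℝ → ℝ → ℝ := fun w y => (1+y) ^ cG * (Dop b1 (b2+1) k g t w y)^2 with hgu2
    have hG'sm : smooth3 (Dop b1 (b2+1) k g) := smooth3_Dop hg b1 (b2+1) k
    have hd : ∀ z w, HasDerivAt (fun s => gu s z) (gu' w z) w := by
      intro z w
      have h0 : HasDerivAt (fun s => G s z) (Dop b1 (b2+1) k g t w z) w := by
        have h1 := hasDerivAt_pdx hGsm t w z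
        rwa [pdx_Dop hg b1 b2 k] at h1
      have h2 := (h0.pow 2).const_mul ((1+z) ^ cG)
      have hee : (1+z) ^ cG * (((2:ℕ) : ℝ) * G w z ^ (2-1) * Dop b1 (b2+1) k g t w z)
          = gu' w z := by
        rw [hgu']
        push_cast
        ring
      exact hee ▸ h2
    have hgu'm : Measurable fun p : ℝ × ℝ => gu' p.1 p.2 :=
      ((hmeasW cG).comp measurable_snd).mul
        ((measurable_const.mul hGc.measurable).mul (contXY hG'sm t).measurable)
    have hgu'c : ∀ z, Continuous fun w => gu' w z := fun z =>
      continuous_const.mul ((continuous_const.mul (contSliceX hGsm t z)).mul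
        (contSliceX hG'sm t z))
    have hcore : ∀ x ∈ Icc (0:ℝ) 1, Phi x ≤
        (∫⁻ w in Icc (0:ℝ) 1, ∫⁻ z in Ici (0:ℝ), ENNReal.ofReal (gu w z))
        + ∫⁻ w in Icc (0:ℝ) 1, ∫⁻ z in Ici (0:ℝ), ENNReal.ofReal |gu' w z| :=
      fun x hx => core_ftc gu gu' hmGj hgu'm hgu'c hd x hx
    have hmgu2 : Measurable fun p : ℝ × ℝ => gu2 p.1 p.2 :=
      ((hmeasW cG).comp measurable_snd).mul ((contXY hG'sm t).measurable.pow_const 2)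
    have hint_gu : IntegrableOn (fun p : ℝ × ℝ => gu p.1 p.2) OmegaSet volume := by
      have := hgI (b1, b2, k) (mem_idx3 (by omega))
      simpa [hgu, hcG, hG] using this
    have hnn_gu : ∀ p ∈ OmegaSet, 0 ≤ gu p.1 p.2 := fun p hp =>
      mul_nonneg (Real.rpow_nonneg (by linarith [(omega_mem hp).2]) _) (sq_nonneg _)
    have hLgu : ∫⁻ w in Icc (0:ℝ) 1, ∫⁻ z in Ici (0:ℝ), ENNReal.ofReal (gu w z)
        ≤ ENNReal.ofReal Sg := by
      rw [conv_lemma gu hmGj hint_gu hnn_gu]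
      apply ENNReal.ofReal_le_ofReal
      have := term_le m (l+lam) g t b1 b2 k (by omega) hgI
      rw [hSg]
      simpa [hgu, hcG, hG] using this
    have hint_gu2 : IntegrableOn (fun p : ℝ × ℝ => gu2 p.1 p.2) OmegaSet volume := by
      have := hgI (b1, b2+1, k) (mem_idx3 (by omega))
      simpa [hgu2, hcG] using this
    have hnn_gu2 : ∀ p ∈ OmegaSet, 0 ≤ gu2 p.1 p.2 := fun p hp =>
      mul_nonneg (Real.rpow_nonneg (by linarith [(omega_mem hp).2]) _) (sq_nonneg _)
    have hLgu2 : ∫⁻ w in Icc (0:ℝ) 1, ∫⁻ z in Ici (0:ℝ), ENNReal.ofReal (gu2 w z)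
        ≤ ENNReal.ofReal Sg := by
      rw [conv_lemma gu2 hmgu2 hint_gu2 hnn_gu2]
      apply ENNReal.ofReal_le_ofReal
      have := term_le m (l+lam) g t b1 (b2+1) k (by omega) hgI
      rw [hSg]
      exact this
    have habs' : ∀ w, ∀ z ∈ Ici (0:ℝ),
        ENNReal.ofReal |gu' w z| ≤ ENNReal.ofReal (gu w z) + ENNReal.ofReal (gu2 w z) := by
      intro w z hz
      have hz0 : (0:ℝ) ≤ z := hz
      have hw0 : (0:ℝ) ≤ (1+z) ^ cG := Real.rpow_nonneg (by linarith) _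
      have habs : |gu' w z| ≤ gu w z + gu2 w z := by
        rw [hgu', hgu, hgu2, abs_mul, abs_of_nonneg hw0, ← mul_add]
        refine mul_le_mul_of_nonneg_left ?_ hw0
        calc |2 * G w z * Dop b1 (b2+1) k g t w z|
            = 2 * |G w z| * |Dop b1 (b2+1) k g t w z| := by
              rw [abs_mul, abs_mul, abs_two]
          _ ≤ |G w z|^2 + |Dop b1 (b2+1) k g t w z|^2 := two_mul_le_add_sq _ _
          _ = (G w z)^2 + (Dop b1 (b2+1) k g t w z)^2 := by rw [sq_abs, sq_abs]
      exact le_trans (ENNReal.ofReal_le_ofReal habs) ENNReal.ofReal_add_le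
    have hLgu' : ∫⁻ w in Icc (0:ℝ) 1, ∫⁻ z in Ici (0:ℝ), ENNReal.ofReal |gu' w z|
        ≤ ENNReal.ofReal Sg + ENNReal.ofReal Sg := by
      have hstep : ∀ w : ℝ, ∫⁻ z in Ici (0:ℝ), ENNReal.ofReal |gu' w z|
          ≤ (∫⁻ z in Ici (0:ℝ), ENNReal.ofReal (gu w z))
            + ∫⁻ z in Ici (0:ℝ), ENNReal.ofReal (gu2 w z) := by
        intro w
        calc ∫⁻ z in Ici (0:ℝ), ENNReal.ofReal |gu' w z|
            ≤ ∫⁻ z in Ici (0:ℝ), (ENNReal.ofReal (gu w z) + ENNReal.ofReal (gu2 w z)) :=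
              setLIntegral_mono' measurableSet_Ici (habs' w)
          _ = _ := lintegral_add_left (ENNReal.measurable_ofReal.comp
              ((hmeasW cG).mul ((contSliceY hGsm t w).measurable.pow_const 2))) _
      calc ∫⁻ w in Icc (0:ℝ) 1, ∫⁻ z in Ici (0:ℝ), ENNReal.ofReal |gu' w z|
          ≤ ∫⁻ w in Icc (0:ℝ) 1, ((∫⁻ z in Ici (0:ℝ), ENNReal.ofReal (gu w z))
              + ∫⁻ z in Ici (0:ℝ), ENNReal.ofReal (gu2 w z)) :=
            setLIntegral_mono' measurableSet_Icc fun w _ => hstep w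
        _ = (∫⁻ w in Icc (0:ℝ) 1, ∫⁻ z in Ici (0:ℝ), ENNReal.ofReal (gu w z))
              + ∫⁻ w in Icc (0:ℝ) 1, ∫⁻ z in Ici (0:ℝ), ENNReal.ofReal (gu2 w z) :=
            lintegral_add_left (Measurable.lintegral_prod_right'
              (ENNReal.measurable_ofReal.comp hmGj)) _
        _ ≤ ENNReal.ofReal Sg + ENNReal.ofReal Sg := add_le_add hLgu hLgu2
    have hPhibar : ∀ x ∈ Icc (0:ℝ) 1,
        Phi x ≤ ENNReal.ofReal Sg + (ENNReal.ofReal Sg + ENNReal.ofReal Sg) := by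
      intro x hx
      exact (hcore x hx).trans (add_le_add hLgu hLgu')
    have hJInt : ∫⁻ x in Icc (0:ℝ) 1, J x ≤ ENNReal.ofReal Sh := hLju
    calc ∫⁻ x in Icc (0:ℝ) 1, Phi x * J x
        ≤ ∫⁻ x in Icc (0:ℝ) 1, (ENNReal.ofReal Sg
            + (ENNReal.ofReal Sg + ENNReal.ofReal Sg)) * J x :=
          setLIntegral_mono' measurableSet_Icc fun x hx => mul_le_mul_left (hPhibar x hx) _
      _ = (ENNReal.ofReal Sg + (ENNReal.ofReal Sg + ENNReal.ofReal Sg))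
            * ∫⁻ x in Icc (0:ℝ) 1, J x := lintegral_const_mul _ hJm
      _ ≤ (ENNReal.ofReal Sg + (ENNReal.ofReal Sg + ENNReal.ofReal Sg))
            * ENNReal.ofReal Sh := mul_le_mul_right hJInt _
      _ = ENNReal.ofReal (3 * (Sg * Sh)) := by
          rw [← ENNReal.ofReal_add hSg0 hSg0, ← ENNReal.ofReal_add hSg0 (by linarith),
            ← ENNReal.ofReal_mul (by linarith)]
          congr 1
          ring


end UPA

/-- weighted estimate of D^α g · ∂_τ^{β̃} ∂_y^{-1} h, with the
particular case λ = 1. -/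
theorem weighted_product_antideriv_estimate (m : ℕ) (hm : 3 ≤ m)
    (lam : ℝ) (hlam : 1/2 < lam) :
    ∃ C > 0, ∀ (l : ℝ) (b1 b2 k bt1 bt2 : ℕ), b1 + b2 + k + (bt1 + bt2) ≤ m →
      ∀ g h : F3, smooth3 g → smooth3 h →
      ∀ t : ℝ, MemHcal m (l + lam) g t → MemHcal m (1 - lam) h t →
        MemHcal m (l + 1) g t → MemHcal m 0 h t →
      (L2l (l + (k:ℝ)) (fun x y => Dop b1 b2 k g t x y * dtau bt1 bt2 (psiF h) t x y)
          ≤ C * Real.sqrt (HcalSq m (l + lam) g t) * Real.sqrt (HcalSq m (1 - lam) h t))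
      ∧ (lam = 1 →
          L2l (l + (k:ℝ)) (fun x y => Dop b1 b2 k g t x y * dtau bt1 bt2 (psiF h) t x y)
            ≤ C * Real.sqrt (HcalSq m (l + 1) g t) * Real.sqrt (HcalSq m 0 h t)) := by
  refine ⟨2, by norm_num, ?_⟩
  intro l b1 b2 k bt1 bt2 hsum g h hg hh t hg1 hh1 hg2 hh2
  constructor
  · exact UPA.big m (by omega) lam hlam l b1 b2 k bt1 bt2 hsum g h hg hh t hg1 hh1
  · intro hl1
    subst hl1
    have e : (1:ℝ) - 1 = 0 := by norm_num
    have hh2' : MemHcal m (1 - (1:ℝ)) h t := by rw [e]; exact hh2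
    have hb := UPA.big m (by omega) 1 (by norm_num) l b1 b2 k bt1 bt2 hsum g h hg hh t hg2 hh2'
    rwa [e] at hb

end
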